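/- For a 1-form ω on a Lorentzian vector space, the superenergy tensor T{ω}(x,y) = ω(x)ω(y) - (1/2) g⁻¹(ω,ω) g(x,y) satisfies: T{ω} = 0 if and only if ω = 0. -/
import Mathlib


open scoped BigOperators

noncomputable section

/-- Minkowski metric on `Fin n → ℝ`, mostly-plus signature (1, n-1). -/
def mink (n : ℕ) [NeZero n] (u v : Fin n → ℝ) : ℝ :=
  ∑ i : Fin n, (if i = 0 then (-1 : ℝ) else 1) * u i * v i

/-- Future-pointing causal vector: nonpositive norm, in the closed future half-cone. -/
def FutureCausal (n : ℕ) [NeZero n] (u : Fin n → ℝ) : Prop :=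
  mink n u u ≤ 0 ∧ 0 ≤ u 0

/-- Inverse Minkowski metric acting on covectors (components in the standard basis). -/
def minkInv (n : ℕ) [NeZero n] (k l : (Fin n → ℝ) →ₗ[ℝ] ℝ) : ℝ :=
  ∑ i : Fin n, (if i = 0 then (-1 : ℝ) else 1) * k (Pi.single i 1) * l (Pi.single i 1)

/-- Superenergy tensor of a 1-form:
`T{ω}(x,y) = ω(x)ω(y) - (1/2) g⁻¹(ω,ω) g(x,y)`. -/
def seT1 (n : ℕ) [NeZero n] (ω : (Fin n → ℝ) →ₗ[ℝ] ℝ) (x y : Fin n → ℝ) : ℝ :=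
  ω x * ω y - (1 / 2) * minkInv n ω ω * mink n x y

lemma mink_single (n : ℕ) [NeZero n] (i : Fin n) :
    mink n (Pi.single i 1) (Pi.single i 1) = (if i = 0 then (-1 : ℝ) else 1) := by
  unfold mink
  rw [Finset.sum_eq_single i]
  · simp
  · intro j _ hj
    simp [Pi.single_apply, hj.symm]
  · simp

/-- The superenergy tensor of a 1-form vanishes iff the 1-form vanishes. -/
theorem stmt_7 (n : ℕ) [NeZero n] (hn : 2 ≤ n)
    (ω : (Fin n → ℝ) →ₗ[ℝ] ℝ) :
    (∀ x y : Fin n → ℝ, seT1 n ω x y = 0) ↔ ω = 0 := by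
  constructor
  · intro h
    set Q := minkInv n ω ω with hQ
    have key : ∀ i : Fin n, ω (Pi.single i 1) * ω (Pi.single i 1)
        = (1/2) * Q * (if i = 0 then (-1 : ℝ) else 1) := by
      intro i
      have h1 := h (Pi.single i 1) (Pi.single i 1)
      rw [seT1, mink_single] at h1
      linarith
    have h0 := key 0
    have h1 := key ⟨1, hn⟩
    have hne : (⟨1, hn⟩ : Fin n) ≠ 0 := by
      simp [Fin.ext_iff]
    rw [if_pos rfl] at h0
    rw [if_neg hne] at h1
    have hs0 := mul_self_nonneg (ω (Pi.single (0 : Fin n) 1))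
    have hs1 := mul_self_nonneg (ω (Pi.single (⟨1, hn⟩ : Fin n) 1))
    have hQ0 : Q = 0 := by nlinarith
    apply (Pi.basisFun ℝ (Fin n)).ext
    intro i
    have := key i
    rw [hQ0] at this
    have hz : ω (Pi.single i 1) = 0 := by nlinarith [this]
    simpa [Pi.basisFun_apply] using hz
  · intro h x y
    simp [h, seT1, minkInv]
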